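/- Let G = (V, E_1, …, E_k) be a multilayer graph. The maximum of Σ_{i∈[k]} |S_i| − d_k(S_1,…,S_k) over all families of labelings S_i ⊆ E_i (i ∈ [k]) in which each S_i fulfills the STC for E_i equals the maximum of Σ_{i∈[k]} |S_i| over all such families that additionally satisfy d_k(S_1,…,S_k) = 0. -/

import Mathlib

open Finset

/-- A wedge `(v, {u, w})` of an edge set `E`. -/
def IsWedge {V : Type*} (E : Finset (Sym2 V)) (v u w : V) : Prop :=
  u ≠ v ∧ v ≠ w ∧ u ≠ w ∧ s(u, v) ∈ E ∧ s(v, w) ∈ E ∧ s(u, w) ∉ E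

/-- A labeling `S ⊆ E` fulfills the strong triadic closure for `E`. -/
def FulfillsSTC {V : Type*} (E S : Finset (Sym2 V)) : Prop :=
  ∀ u v w : V, u ≠ v → v ≠ w → u ≠ w → s(u, v) ∈ S → s(v, w) ∈ S → s(u, w) ∈ E

/-- `s(e)`: the number of layers in which `e` is labeled strong. -/
def sCount {V : Type*} [DecidableEq V] {k : ℕ} (Ss : Fin k → Finset (Sym2 V))
    (e : Sym2 V) : ℕ :=
  (Finset.univ.filter fun i => e ∈ Ss i).card

/-- `w(e)`: the number of layers in which `e` is labeled weak. -/
def wCount {V : Type*} [DecidableEq V] {k : ℕ} (Es Ss : Fin k → Finset (Sym2 V))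
    (e : Sym2 V) : ℕ :=
  (Finset.univ.filter fun i => e ∈ Es i ∧ e ∉ Ss i).card

/-- `d_k(S_1, …, S_k) = ∑_{e ∈ E, w(e) > 0} s(e)`: the number of disagreements. -/
def disagree {V : Type*} [DecidableEq V] {k : ℕ} (Es Ss : Fin k → Finset (Sym2 V)) : ℕ :=
  ∑ e ∈ (Finset.univ.biUnion Es).filter (fun e => 0 < wCount Es Ss e), sCount Ss e

/-- The maximum of `∑_i |S_i| − d_k(S_1, …, S_k)` over all families of labelings each
fulfilling the STC equals the maximum of `∑_i |S_i|` over all such families with no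
disagreements. -/
theorem max_multilayer_stc_eq_max_consistent {V : Type*} [DecidableEq V] {k : ℕ}
    (Es : Fin k → Finset (Sym2 V)) :
    sSup {n : ℕ | ∃ Ss : Fin k → Finset (Sym2 V),
        (∀ i, Ss i ⊆ Es i) ∧ (∀ i, FulfillsSTC (Es i) (Ss i)) ∧
        n = (∑ i : Fin k, (Ss i).card) - disagree Es Ss}
      = sSup {n : ℕ | ∃ Ss : Fin k → Finset (Sym2 V),
        (∀ i, Ss i ⊆ Es i) ∧ (∀ i, FulfillsSTC (Es i) (Ss i)) ∧
        disagree Es Ss = 0 ∧ n = ∑ i : Fin k, (Ss i).card} := by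
  congr 1
  ext n
  constructor
  · rintro ⟨Ss, hsub, hstc, rfl⟩
    set S' : Fin k → Finset (Sym2 V) :=
      fun i => (Ss i).filter (fun e => wCount Es Ss e = 0) with hS'
    -- if e is in some S' i, then e is in S' j for every j with e ∈ Es j
    have hkey : ∀ e : Sym2 V, (∃ i, e ∈ S' i) → wCount Es S' e = 0 := by
      intro e ⟨i, hi⟩
      have hi' := (mem_filter.mp hi)
      have hw0 : wCount Es Ss e = 0 := hi'.2
      have hall : ∀ j, e ∈ Es j → e ∈ Ss j := by
        intro j hj
        by_contra hns
        have h0 : (Finset.univ.filter fun i => e ∈ Es i ∧ e ∉ Ss i) = ∅ :=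
          Finset.card_eq_zero.mp hw0
        exact Finset.filter_eq_empty_iff.mp h0 (mem_univ j) ⟨hj, hns⟩
      unfold wCount
      rw [Finset.card_eq_zero, Finset.filter_eq_empty_iff]
      intro j _
      rintro ⟨hje, hjs⟩
      exact hjs (mem_filter.mpr ⟨hall j hje, hw0⟩)
    have hsub' : ∀ i, S' i ⊆ Es i := fun i => (filter_subset _ _).trans (hsub i)
    refine ⟨S', hsub', ?_, ?_, ?_⟩
    · intro i u v w h1 h2 h3 huv hvw
      exact hstc i u v w h1 h2 h3 (mem_of_mem_filter _ huv) (mem_of_mem_filter _ hvw)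
    · unfold disagree
      apply Finset.sum_eq_zero
      intro e he
      have hpos := (mem_filter.mp he).2
      unfold sCount
      rw [Finset.card_eq_zero, Finset.filter_eq_empty_iff]
      intro i _ hi
      rw [hkey e ⟨i, hi⟩] at hpos
      exact lt_irrefl 0 hpos
    · -- size computation
      have hsplit : ∀ i : Fin k,
          (S' i).card + ((Ss i).filter (fun e => ¬ wCount Es Ss e = 0)).card
            = (Ss i).card := by
        intro i
        exact Finset.card_filter_add_card_filter_not _
      have hdis : disagree Es Ss
          = ∑ i : Fin k, ((Ss i).filter (fun e => ¬ wCount Es Ss e = 0)).card := by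
        unfold disagree sCount
        have : ∀ e ∈ (Finset.univ.biUnion Es).filter (fun e => 0 < wCount Es Ss e),
            (Finset.univ.filter fun i => e ∈ Ss i).card
              = ∑ i : Fin k, if e ∈ Ss i then 1 else 0 := by
          intro e _
          rw [Finset.card_filter]
        rw [Finset.sum_congr rfl this, Finset.sum_comm]
        apply Finset.sum_congr rfl
        intro i _
        rw [← Finset.card_filter]
        congr 1
        ext e
        simp only [mem_filter, Finset.mem_biUnion, mem_univ, true_and]
        constructor
        · rintro ⟨⟨_, hpos⟩, hs⟩
          exact ⟨hs, Nat.pos_iff_ne_zero.mp hpos⟩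
        · rintro ⟨hs, hne⟩
          exact ⟨⟨⟨i, hsub i hs⟩, Nat.pos_of_ne_zero hne⟩, hs⟩
      have htot : (∑ i : Fin k, (S' i).card) + disagree Es Ss
          = ∑ i : Fin k, (Ss i).card := by
        rw [hdis, ← Finset.sum_add_distrib]
        exact Finset.sum_congr rfl fun i _ => hsplit i
      omega
  · rintro ⟨Ss, hsub, hstc, hd, rfl⟩
    exact ⟨Ss, hsub, hstc, by rw [hd, Nat.sub_zero]⟩
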